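/- Let Ω₁, Ω₂ : [0,T] → Sym(n,ℝ) be C¹ solutions of the Riccati differential equations Ω̇ₖ = AΩₖ + ΩₖA^T + Q − ηₖ(t)ΩₖGΩₖ (k = 1,2), where G and Q are symmetric positive semidefinite, η₁, η₂ are continuous nonnegative scalar functions with η₁(t) ≥ η₂(t) for all t, and both solutions remain bounded and positive semidefinite on [0,T]. If Ω₁(0) − Ω₂(0) is negative semidefinite, then Ω₁(t) − Ω₂(t) is negative semidefinite for all t ∈ [0,T]. -/

import Mathlib

set_option maxHeartbeats 1000000

open Matrix Set Filter Topology Metric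

lemma quad_expand {n : ℕ} (M : Matrix (Fin n) (Fin n) ℝ) (x y : Fin n → ℝ) :
    x ⬝ᵥ (M *ᵥ y) = ∑ i, ∑ j, x i * M i j * y j := by
  simp [dotProduct, Matrix.mulVec, Finset.mul_sum, mul_assoc]

lemma abs_quad_le {n : ℕ} (M : Matrix (Fin n) (Fin n) ℝ) (x y : Fin n → ℝ)
    (hx : ∀ i, |x i| ≤ 1) (b : ℝ) (hy : ∀ j, |y j| ≤ b) :
    |x ⬝ᵥ (M *ᵥ y)| ≤ (∑ i, ∑ j, |M i j|) * b := by
  rw [quad_expand]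
  calc |∑ i, ∑ j, x i * M i j * y j| ≤ ∑ i, ∑ j, |x i * M i j * y j| := by
        refine (Finset.abs_sum_le_sum_abs _ _).trans ?_
        exact Finset.sum_le_sum fun i _ => Finset.abs_sum_le_sum_abs _ _
    _ ≤ ∑ i, ∑ j, |M i j| * b := by
        refine Finset.sum_le_sum fun i _ => Finset.sum_le_sum fun j _ => ?_
        rw [abs_mul, abs_mul]
        have h1 : 0 ≤ |M i j| := abs_nonneg _
        have h2 : 0 ≤ |y j| := abs_nonneg _
        have hb : |y j| ≤ b := hy j
        calc |x i| * |M i j| * |y j| ≤ 1 * |M i j| * |y j| := by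
              apply mul_le_mul_of_nonneg_right _ h2
              exact mul_le_mul_of_nonneg_right (hx i) h1
          _ = |M i j| * |y j| := by ring
          _ ≤ |M i j| * b := mul_le_mul_of_nonneg_left hb h1
    _ = (∑ i, ∑ j, |M i j|) * b := by rw [Finset.sum_mul]; congr 1; ext i; rw [Finset.sum_mul]

lemma scale_quad {n : ℕ} (M : Matrix (Fin n) (Fin n) ℝ)
    (h : ∀ y : Fin n → ℝ, (∑ i, y i ^ 2) = 1 → 0 ≤ y ⬝ᵥ (M *ᵥ y)) :
    ∀ y : Fin n → ℝ, 0 ≤ y ⬝ᵥ (M *ᵥ y) := by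
  intro y
  rcases eq_or_ne y 0 with rfl | hy
  · simp
  · have hsum : 0 < ∑ i, y i ^ 2 := by
      obtain ⟨i, hi⟩ := Function.ne_iff.mp hy
      refine Finset.sum_pos' (fun j _ => sq_nonneg _) ⟨i, Finset.mem_univ i, ?_⟩
      exact lt_of_le_of_ne (sq_nonneg _) (Ne.symm (pow_ne_zero 2 hi))
    set r := Real.sqrt (∑ i, y i ^ 2) with hr
    have hrpos : 0 < r := Real.sqrt_pos.mpr hsum
    have hr2 : r ^ 2 = ∑ i, y i ^ 2 := Real.sq_sqrt hsum.le
    set z := r⁻¹ • y with hz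
    have hz1 : (∑ i, z i ^ 2) = 1 := by
      simp only [hz, Pi.smul_apply, smul_eq_mul, mul_pow, ← Finset.mul_sum]
      rw [← hr2]
      field_simp
    have hyz : y = r • z := by
      rw [hz, smul_smul, mul_inv_cancel₀ hrpos.ne', one_smul]
    have hq := h z hz1
    have hsq : ((r • z) : Fin n → ℝ) ⬝ᵥ (M *ᵥ (r • z)) = r ^ 2 * (z ⬝ᵥ (M *ᵥ z)) := by
      rw [Matrix.mulVec_smul, smul_dotProduct, dotProduct_smul, smul_eq_mul, smul_eq_mul]
      ring
    calc (0:ℝ) ≤ r ^ 2 * (z ⬝ᵥ (M *ᵥ z)) := mul_nonneg (sq_nonneg r) hq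
      _ = y ⬝ᵥ (M *ᵥ y) := by rw [hyz]; exact hsq.symm

lemma psd_kernel {n : ℕ} {M : Matrix (Fin n) (Fin n) ℝ} (hsym : Mᵀ = M)
    (h : ∀ y : Fin n → ℝ, 0 ≤ y ⬝ᵥ (M *ᵥ y)) {x : Fin n → ℝ}
    (hx : x ⬝ᵥ (M *ᵥ x) = 0) : M *ᵥ x = 0 := by
  funext j
  set b := (M *ᵥ x) j with hb
  set z : Fin n → ℝ := Pi.single j 1 with hzdef
  set a := z ⬝ᵥ (M *ᵥ z) with ha
  have hanon : 0 ≤ a := h z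
  have hcross : x ⬝ᵥ (M *ᵥ z) = b := by
    rw [Matrix.dotProduct_mulVec, ← Matrix.mulVec_transpose, hsym, hzdef,
      dotProduct_single]
    simp [hb]
  have hcross' : z ⬝ᵥ (M *ᵥ x) = b := by
    rw [hzdef, single_dotProduct]; simp [hb]
  have key : ∀ t : ℝ, 0 ≤ a * t ^ 2 + 2 * t * b := by
    intro t
    have := h (x + t • z)
    rw [Matrix.mulVec_add, Matrix.mulVec_smul, dotProduct_add, add_dotProduct,
      add_dotProduct, dotProduct_smul, smul_dotProduct, smul_dotProduct,
      dotProduct_smul] at this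
    simp only [smul_eq_mul, hx, hcross, hcross', ← ha] at this
    nlinarith [this]
  have h1 := key (-(b / (a + 1)))
  have hap : (0:ℝ) < a + 1 := by linarith
  have hb2 : b ^ 2 ≤ 0 := by
    have e : a * (-(b / (a + 1))) ^ 2 + 2 * (-(b / (a + 1))) * b
        = -(b ^ 2 * (a + 2)) / (a + 1) ^ 2 := by field_simp; ring
    rw [e] at h1
    have hne : ((a + 1) ^ 2 : ℝ) ≠ 0 := by positivity
    have h2 : (0:ℝ) ≤ -(b ^ 2 * (a + 2)) := by
      have := mul_nonneg h1 (sq_nonneg (a + 1))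
      rwa [div_mul_cancel₀ _ hne] at this
    nlinarith [h2, hanon]
  have : b ^ 2 = 0 := le_antisymm hb2 (sq_nonneg b)
  show b = 0
  exact pow_eq_zero_iff (n := 2) (by norm_num) |>.mp this

lemma dot_symm_mulVec {n : ℕ} {M : Matrix (Fin n) (Fin n) ℝ} (hsym : Mᵀ = M)
    (v w : Fin n → ℝ) : v ⬝ᵥ (M *ᵥ w) = (M *ᵥ v) ⬝ᵥ w := by
  rw [Matrix.dotProduct_mulVec, ← Matrix.mulVec_transpose, hsym]

theorem riccati_monotonicity_in_gain {n : ℕ} {T : ℝ} (hT : 0 ≤ T)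
    (A G Q : Matrix (Fin n) (Fin n) ℝ)
    (hG : G.PosSemidef) (hQ : Q.PosSemidef)
    (η₁ η₂ : ℝ → ℝ) (hη₁ : Continuous η₁) (hη₂ : Continuous η₂)
    (hη₂nonneg : ∀ t, 0 ≤ η₂ t) (hη : ∀ t, η₂ t ≤ η₁ t)
    (Ω₁ Ω₂ : ℝ → Matrix (Fin n) (Fin n) ℝ)
    (hC1₁ : ∀ i j, ContinuousOn (fun t => Ω₁ t i j) (Icc 0 T))
    (hC1₂ : ∀ i j, ContinuousOn (fun t => Ω₂ t i j) (Icc 0 T))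
    (hode₁ : ∀ t ∈ Icc 0 T, ∀ i j, HasDerivAt (fun t' => Ω₁ t' i j)
      ((A * Ω₁ t + Ω₁ t * Aᵀ + Q - η₁ t • (Ω₁ t * G * Ω₁ t)) i j) t)
    (hode₂ : ∀ t ∈ Icc 0 T, ∀ i j, HasDerivAt (fun t' => Ω₂ t' i j)
      ((A * Ω₂ t + Ω₂ t * Aᵀ + Q - η₂ t • (Ω₂ t * G * Ω₂ t)) i j) t)
    (hpsd₁ : ∀ t ∈ Icc 0 T, (Ω₁ t).PosSemidef)
    (hpsd₂ : ∀ t ∈ Icc 0 T, (Ω₂ t).PosSemidef)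
    (hbdd₁ : ∃ B, ∀ t ∈ Icc 0 T, ∀ i j, |Ω₁ t i j| ≤ B)
    (hbdd₂ : ∃ B, ∀ t ∈ Icc 0 T, ∀ i j, |Ω₂ t i j| ≤ B)
    (h0 : (Ω₂ 0 - Ω₁ 0).PosSemidef) :
    ∀ t ∈ Icc 0 T, (Ω₂ t - Ω₁ t).PosSemidef := by
  obtain ⟨B₂, hB₂⟩ := hbdd₂
  set B₂' : ℝ := max B₂ 0 with hB₂'def
  have hB₂'0 : (0:ℝ) ≤ B₂' := le_max_right _ _
  have hB₂' : ∀ t ∈ Icc 0 T, ∀ i j, |Ω₂ t i j| ≤ B₂' :=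
    fun t ht i j => (hB₂ t ht i j).trans (le_max_left _ _)
  obtain ⟨Cη, hCη⟩ := isCompact_Icc.exists_bound_of_continuousOn
    (f := η₂) (s := Icc 0 T) hη₂.continuousOn
  set Bη : ℝ := max Cη 0 with hBηdef
  have hBη0 : (0:ℝ) ≤ Bη := le_max_right _ _
  have hBη : ∀ t ∈ Icc 0 T, η₂ t ≤ Bη := by
    intro t ht
    have := hCη t ht
    rw [Real.norm_eq_abs] at this
    exact (le_abs_self _).trans (this.trans (le_max_left _ _))
  set SA : ℝ := ∑ i, ∑ j, |A i j| with hSAdef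
  set SG : ℝ := ∑ i, ∑ j, |G i j| with hSGdef
  have hSA0 : 0 ≤ SA :=
    Finset.sum_nonneg fun i _ => Finset.sum_nonneg fun j _ => abs_nonneg _
  have hSG0 : 0 ≤ SG :=
    Finset.sum_nonneg fun i _ => Finset.sum_nonneg fun j _ => abs_nonneg _
  set K2 : ℝ := SG * (↑n * B₂') with hK2def
  have hK20 : 0 ≤ K2 := mul_nonneg hSG0 (mul_nonneg (Nat.cast_nonneg n) hB₂'0)
  set c : ℝ := 2 * SA + 2 * (Bη * K2) + 1 with hcdef
  have hc0 : 0 ≤ c := by positivity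
  -- symmetry facts
  have hΩ₁sym : ∀ t ∈ Icc 0 T, (Ω₁ t)ᵀ = Ω₁ t := by
    intro t ht
    have := (hpsd₁ t ht).1
    rwa [Matrix.IsHermitian, Matrix.conjTranspose_eq_transpose_of_trivial] at this
  have hΩ₂sym : ∀ t ∈ Icc 0 T, (Ω₂ t)ᵀ = Ω₂ t := by
    intro t ht
    have := (hpsd₂ t ht).1
    rwa [Matrix.IsHermitian, Matrix.conjTranspose_eq_transpose_of_trivial] at this
  have hGsym : Gᵀ = G := by
    have := hG.1
    rwa [Matrix.IsHermitian, Matrix.conjTranspose_eq_transpose_of_trivial] at this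
  have hGq : ∀ v : Fin n → ℝ, 0 ≤ v ⬝ᵥ (G *ᵥ v) := by
    intro v; simpa using hG.dotProduct_mulVec_nonneg v
  -- continuity of the quadratic form in t
  have hqcont : ∀ y : Fin n → ℝ,
      ContinuousOn (fun t => y ⬝ᵥ ((Ω₂ t - Ω₁ t) *ᵥ y)) (Icc 0 T) := by
    intro y
    have : (fun t => y ⬝ᵥ ((Ω₂ t - Ω₁ t) *ᵥ y))
        = fun t => ∑ i, ∑ j, y i * (Ω₂ t i j - Ω₁ t i j) * y j := by
      funext t
      rw [quad_expand]
      simp [Matrix.sub_apply]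
    rw [this]
    apply continuousOn_finset_sum
    intro i _
    apply continuousOn_finset_sum
    intro j _
    exact (continuousOn_const.mul ((hC1₂ i j).sub (hC1₁ i j))).mul continuousOn_const
  -- the key perturbed strict positivity
  have key : ∀ ε : ℝ, 0 < ε → ∀ t ∈ Icc 0 T, ∀ x : Fin n → ℝ, (∑ i, x i ^ 2) = 1 →
      0 < x ⬝ᵥ ((Ω₂ t - Ω₁ t) *ᵥ x) + ε * Real.exp (c * t) := by
    intro ε hε
    by_contra hcon
    push_neg at hcon
    obtain ⟨t₀, ht₀, x₀, hx₀, hle₀⟩ := hcon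
    set S : Set ℝ := {t | t ∈ Icc 0 T ∧ ∃ x : Fin n → ℝ, (∑ i, x i ^ 2) = 1 ∧
      x ⬝ᵥ ((Ω₂ t - Ω₁ t) *ᵥ x) + ε * Real.exp (c * t) ≤ 0} with hSdef
    -- S is closed via compactness
    have hScl : IsClosed S := by
      classical
      set F : ℝ × EuclideanSpace ℝ (Fin n) → ℝ := fun p =>
        (∑ i, ∑ j, (WithLp.equiv 2 (Fin n → ℝ)) p.2 i * (Ω₂ p.1 i j - Ω₁ p.1 i j)
          * (WithLp.equiv 2 (Fin n → ℝ)) p.2 j) + ε * Real.exp (c * p.1) with hFdef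
      have hcoord : ∀ k : Fin n, Continuous fun p : ℝ × EuclideanSpace ℝ (Fin n) =>
          (WithLp.equiv 2 (Fin n → ℝ)) p.2 k :=
        fun k => (continuous_apply k).comp ((PiLp.continuous_ofLp (p := 2) (β := fun _ : Fin n => ℝ)).comp continuous_snd)
      have hFcont : ContinuousOn F ((Icc 0 T) ×ˢ sphere (0 : EuclideanSpace ℝ (Fin n)) 1) := by
        apply ContinuousOn.add
        · apply continuousOn_finset_sum
          intro i _
          apply continuousOn_finset_sum
          intro j _
          have hentry : ContinuousOn (fun p : ℝ × EuclideanSpace ℝ (Fin n) =>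
              Ω₂ p.1 i j - Ω₁ p.1 i j) ((Icc 0 T) ×ˢ sphere (0 : EuclideanSpace ℝ (Fin n)) 1) := by
            apply ContinuousOn.comp ((hC1₂ i j).sub (hC1₁ i j)) continuous_fst.continuousOn
            intro p hp
            exact hp.1
          exact ((hcoord i).continuousOn.mul hentry).mul (hcoord j).continuousOn
        · exact (continuous_const.mul (Real.continuous_exp.comp
            (continuous_const.mul continuous_fst))).continuousOn
      set K : Set (ℝ × EuclideanSpace ℝ (Fin n)) :=
        ((Icc 0 T) ×ˢ sphere (0 : EuclideanSpace ℝ (Fin n)) 1) ∩ F ⁻¹' (Iic 0) with hKdef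
      have hKcl : IsClosed K := hFcont.preimage_isClosed_of_isClosed
        (isClosed_Icc.prod isClosed_sphere) isClosed_Iic
      have hKcp : IsCompact K :=
        ((isCompact_Icc.prod (isCompact_sphere _ _)).of_isClosed_subset hKcl
          Set.inter_subset_left)
      have hnorm_sumsq : ∀ z : EuclideanSpace ℝ (Fin n),
          ‖z‖ = 1 ↔ (∑ i, ((WithLp.equiv 2 (Fin n → ℝ)) z) i ^ 2) = 1 := by
        intro z
        rw [EuclideanSpace.norm_eq, Real.sqrt_eq_one]
        constructor
        · intro h; rw [← h]; congr 1; funext i; rw [Real.norm_eq_abs, sq_abs]; rfl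
        · intro h; rw [← h]; congr 1; funext i; rw [Real.norm_eq_abs, sq_abs]; rfl
      have him : S = Prod.fst '' K := by
        ext t
        constructor
        · rintro ⟨htIcc, y, hy1, hyle⟩
          refine ⟨(t, (WithLp.equiv 2 (Fin n → ℝ)).symm y), ⟨⟨htIcc, ?_⟩, ?_⟩, rfl⟩
          · rw [mem_sphere_zero_iff_norm, hnorm_sumsq]
            simpa using hy1
          · show F _ ≤ 0
            rw [hFdef]
            simp only [Equiv.apply_symm_apply]
            have heq : (∑ i, ∑ j, y i * (Ω₂ t i j - Ω₁ t i j) * y j)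
                = y ⬝ᵥ ((Ω₂ t - Ω₁ t) *ᵥ y) := by
              rw [quad_expand]; simp [Matrix.sub_apply]
            rw [heq]
            exact hyle
        · rintro ⟨⟨t', z⟩, ⟨⟨htIcc, hzs⟩, hFle⟩, rfl⟩
          refine ⟨htIcc, (WithLp.equiv 2 (Fin n → ℝ)) z, ?_, ?_⟩
          · exact (hnorm_sumsq z).mp (mem_sphere_zero_iff_norm.mp hzs)
          · have hFle' : F (t', z) ≤ 0 := hFle
            simp only [hFdef] at hFle'
            have heq : (∑ i, ∑ j, (WithLp.equiv 2 (Fin n → ℝ)) z i * (Ω₂ t' i j - Ω₁ t' i j)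
                * (WithLp.equiv 2 (Fin n → ℝ)) z j)
                = ((WithLp.equiv 2 (Fin n → ℝ)) z) ⬝ᵥ ((Ω₂ t' - Ω₁ t') *ᵥ
                  ((WithLp.equiv 2 (Fin n → ℝ)) z)) := by
              rw [quad_expand]; simp [Matrix.sub_apply]
            rw [heq] at hFle'
            exact hFle'
      rw [him]
      exact (hKcp.image continuous_fst).isClosed
    have hSne : S.Nonempty := ⟨t₀, ht₀, x₀, hx₀, hle₀⟩
    have hSbdd : BddBelow S := ⟨0, fun t ht => ht.1.1⟩
    set s := sInf S with hsdef
    have hsS : s ∈ S := hScl.csInf_mem hSne hSbdd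
    obtain ⟨hsIcc, x, hx1, hxle⟩ := hsS
    have hmin : ∀ t ∈ S, s ≤ t := fun t ht => csInf_le hSbdd ht
    have h0S : (0:ℝ) ∉ S := by
      rintro ⟨-, y, hy1, hyle⟩
      have hy0 : 0 ≤ y ⬝ᵥ ((Ω₂ 0 - Ω₁ 0) *ᵥ y) := by simpa using h0.dotProduct_mulVec_nonneg y
      rw [mul_zero, Real.exp_zero, mul_one] at hyle
      linarith
    have hs_pos : 0 < s := by
      rcases hsIcc.1.lt_or_eq with h | h
      · exact h
      · exact absurd (h ▸ (⟨hsIcc, x, hx1, hxle⟩ : s ∈ S)) (h ▸ h0S)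
    have hlt : ∀ t ∈ Icc 0 T, t < s → ∀ y : Fin n → ℝ, (∑ i, y i ^ 2) = 1 →
        0 < y ⬝ᵥ ((Ω₂ t - Ω₁ t) *ᵥ y) + ε * Real.exp (c * t) := by
      intro t ht hts y hy
      by_contra hc
      push_neg at hc
      exact absurd (hmin t ⟨ht, y, hy, hc⟩) (not_le.mpr hts)
    set lam : ℝ := ε * Real.exp (c * s) with hlamdef
    have hlam : 0 < lam := mul_pos hε (Real.exp_pos _)
    -- positive semidefiniteness at time s of the perturbed matrix
    have hpsd_s : ∀ y : Fin n → ℝ,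
        0 ≤ y ⬝ᵥ (((Ω₂ s - Ω₁ s) + lam • (1 : Matrix (Fin n) (Fin n) ℝ)) *ᵥ y) := by
      apply scale_quad
      intro y hy
      have hyy : y ⬝ᵥ y = 1 := by
        rw [show y ⬝ᵥ y = ∑ i, y i ^ 2 by simp [dotProduct, sq], hy]
      have hexpand : y ⬝ᵥ (((Ω₂ s - Ω₁ s) + lam • (1 : Matrix (Fin n) (Fin n) ℝ)) *ᵥ y)
          = y ⬝ᵥ ((Ω₂ s - Ω₁ s) *ᵥ y) + lam := by
        rw [Matrix.add_mulVec, dotProduct_add, Matrix.smul_mulVec,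
          Matrix.one_mulVec, dotProduct_smul, smul_eq_mul, hyy, mul_one]
      rw [hexpand]
      -- take the limit from the left
      have hsub : Ico (0:ℝ) s ⊆ Icc 0 T :=
        fun t ht => ⟨ht.1, ht.2.le.trans hsIcc.2⟩
      have hcont : ContinuousWithinAt
          (fun t => y ⬝ᵥ ((Ω₂ t - Ω₁ t) *ᵥ y) + ε * Real.exp (c * t)) (Ico 0 s) s := by
        apply ContinuousWithinAt.mono _ hsub
        refine ((hqcont y).add (Continuous.continuousOn ?_)) s hsIcc
        exact continuous_const.mul (Real.continuous_exp.comp (continuous_const.mul continuous_id))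
      haveI : (𝓝[Ico (0:ℝ) s] s).NeBot := by
        apply mem_closure_iff_nhdsWithin_neBot.mp
        rw [closure_Ico hs_pos.ne]
        exact ⟨hs_pos.le, le_refl s⟩
      have hev : ∀ᶠ t in 𝓝[Ico (0:ℝ) s] s,
          0 ≤ y ⬝ᵥ ((Ω₂ t - Ω₁ t) *ᵥ y) + ε * Real.exp (c * t) := by
        filter_upwards [eventually_mem_nhdsWithin] with t ht
        exact (hlt t (hsub ht) ht.2 y hy).le
      exact ge_of_tendsto hcont hev
    -- the kernel vector
    have hsymM : ((Ω₂ s - Ω₁ s) + lam • (1 : Matrix (Fin n) (Fin n) ℝ))ᵀ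
        = (Ω₂ s - Ω₁ s) + lam • (1 : Matrix (Fin n) (Fin n) ℝ) := by
      rw [Matrix.transpose_add, Matrix.transpose_sub, Matrix.transpose_smul,
        Matrix.transpose_one, hΩ₂sym s hsIcc, hΩ₁sym s hsIcc]
    have hxx : x ⬝ᵥ x = 1 := by
      rw [show x ⬝ᵥ x = ∑ i, x i ^ 2 by simp [dotProduct, sq], hx1]
    have hexpandx : x ⬝ᵥ (((Ω₂ s - Ω₁ s) + lam • (1 : Matrix (Fin n) (Fin n) ℝ)) *ᵥ x)
        = x ⬝ᵥ ((Ω₂ s - Ω₁ s) *ᵥ x) + lam := by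
      rw [Matrix.add_mulVec, dotProduct_add, Matrix.smul_mulVec,
        Matrix.one_mulVec, dotProduct_smul, smul_eq_mul, hxx, mul_one]
    have hq0 : x ⬝ᵥ ((Ω₂ s - Ω₁ s) *ᵥ x) + lam = 0 := by
      have h1 := hpsd_s x
      rw [hexpandx] at h1
      linarith
    have hker : ((Ω₂ s - Ω₁ s) + lam • (1 : Matrix (Fin n) (Fin n) ℝ)) *ᵥ x = 0 := by
      apply psd_kernel hsymM hpsd_s
      rw [hexpandx]; exact hq0
    have hΔx : (Ω₂ s - Ω₁ s) *ᵥ x = -(lam • x) := by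
      have h := hker
      rw [Matrix.add_mulVec, Matrix.smul_mulVec, Matrix.one_mulVec] at h
      exact eq_neg_of_add_eq_zero_left h
    -- derivative analysis at time s
    have hsymΔ : (Ω₂ s - Ω₁ s)ᵀ = Ω₂ s - Ω₁ s := by
      rw [Matrix.transpose_sub, hΩ₂sym s hsIcc, hΩ₁sym s hsIcc]
    set u : Fin n → ℝ := Ω₁ s *ᵥ x with hudef
    set w : Fin n → ℝ := Ω₂ s *ᵥ x with hwdef
    have hu : u = w + lam • x := by
      have h1 : (Ω₂ s - Ω₁ s) *ᵥ x = w - u := by rw [Matrix.sub_mulVec]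
      rw [h1] at hΔx
      funext i
      have := congrFun hΔx i
      simp only [Pi.sub_apply, Pi.add_apply, Pi.neg_apply, Pi.smul_apply, smul_eq_mul] at this ⊢
      linarith
    set E₁ : Matrix (Fin n) (Fin n) ℝ :=
      A * Ω₁ s + Ω₁ s * Aᵀ + Q - η₁ s • (Ω₁ s * G * Ω₁ s) with hE₁
    set E₂ : Matrix (Fin n) (Fin n) ℝ :=
      A * Ω₂ s + Ω₂ s * Aᵀ + Q - η₂ s • (Ω₂ s * G * Ω₂ s) with hE₂
    have hDmat : E₂ - E₁ = A * (Ω₂ s - Ω₁ s) + (Ω₂ s - Ω₁ s) * Aᵀ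
        + (η₁ s • (Ω₁ s * G * Ω₁ s) - η₂ s • (Ω₂ s * G * Ω₂ s)) := by
      rw [hE₁, hE₂, Matrix.mul_sub, Matrix.sub_mul]
      abel
    have hT1 : x ⬝ᵥ ((A * (Ω₂ s - Ω₁ s)) *ᵥ x) = -(lam * (x ⬝ᵥ (A *ᵥ x))) := by
      rw [← Matrix.mulVec_mulVec, hΔx, Matrix.mulVec_neg, Matrix.mulVec_smul,
        dotProduct_neg, dotProduct_smul, smul_eq_mul]
    have hT2 : x ⬝ᵥ (((Ω₂ s - Ω₁ s) * Aᵀ) *ᵥ x) = -(lam * (x ⬝ᵥ (Aᵀ *ᵥ x))) := by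
      rw [← Matrix.mulVec_mulVec, dot_symm_mulVec hsymΔ, hΔx, neg_dotProduct,
        smul_dotProduct, smul_eq_mul]
    have hT3 : x ⬝ᵥ ((Ω₁ s * G * Ω₁ s) *ᵥ x) = u ⬝ᵥ (G *ᵥ u) := by
      rw [← Matrix.mulVec_mulVec, ← Matrix.mulVec_mulVec,
        dot_symm_mulVec (hΩ₁sym s hsIcc)]
    have hT4 : x ⬝ᵥ ((Ω₂ s * G * Ω₂ s) *ᵥ x) = w ⬝ᵥ (G *ᵥ w) := by
      rw [← Matrix.mulVec_mulVec, ← Matrix.mulVec_mulVec,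
        dot_symm_mulVec (hΩ₂sym s hsIcc)]
    have hqDval : x ⬝ᵥ ((E₂ - E₁) *ᵥ x)
        = -(lam * (x ⬝ᵥ (A *ᵥ x))) + -(lam * (x ⬝ᵥ (Aᵀ *ᵥ x)))
          + (η₁ s * (u ⬝ᵥ (G *ᵥ u)) - η₂ s * (w ⬝ᵥ (G *ᵥ w))) := by
      rw [hDmat, Matrix.add_mulVec, Matrix.add_mulVec, dotProduct_add, dotProduct_add,
        Matrix.sub_mulVec, dotProduct_sub, Matrix.smul_mulVec,
        Matrix.smul_mulVec, dotProduct_smul, dotProduct_smul, smul_eq_mul,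
        smul_eq_mul, hT1, hT2, hT3, hT4]
    have hdecomp : u ⬝ᵥ (G *ᵥ u) = w ⬝ᵥ (G *ᵥ w) + 2 * lam * (x ⬝ᵥ (G *ᵥ w))
        + lam ^ 2 * (x ⬝ᵥ (G *ᵥ x)) := by
      have hxw : w ⬝ᵥ (G *ᵥ x) = x ⬝ᵥ (G *ᵥ w) := by
        rw [dot_symm_mulVec hGsym w x, dotProduct_comm]
      rw [hu]
      simp only [Matrix.mulVec_add, Matrix.mulVec_smul, dotProduct_add, add_dotProduct,
        dotProduct_smul, smul_dotProduct, smul_eq_mul, hxw]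
      ring
    have habs : ∀ i, |x i| ≤ 1 := by
      intro i
      rw [← sq_le_one_iff_abs_le_one]
      calc x i ^ 2 ≤ ∑ k, x k ^ 2 :=
            Finset.single_le_sum (fun k _ => sq_nonneg (x k)) (Finset.mem_univ i)
        _ = 1 := hx1
    have hwbd : ∀ j, |w j| ≤ ↑n * B₂' := by
      intro j
      have hwj : w j = ∑ k, Ω₂ s j k * x k := rfl
      rw [hwj]
      calc |∑ k, Ω₂ s j k * x k| ≤ ∑ k, |Ω₂ s j k * x k| := Finset.abs_sum_le_sum_abs _ _
        _ ≤ ∑ _k : Fin n, B₂' := by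
            refine Finset.sum_le_sum fun k _ => ?_
            rw [abs_mul]
            calc |Ω₂ s j k| * |x k| ≤ B₂' * 1 :=
                mul_le_mul (hB₂' s hsIcc j k) (habs k) (abs_nonneg _) hB₂'0
              _ = B₂' := mul_one _
        _ = ↑n * B₂' := by simp [Finset.sum_const, Finset.card_univ, nsmul_eq_mul]
    have haA' : |x ⬝ᵥ (A *ᵥ x)| ≤ SA := by
      have h := abs_quad_le A x x habs 1 habs
      rw [mul_one] at h
      rw [hSAdef]
      exact h
    have haAt' : |x ⬝ᵥ (Aᵀ *ᵥ x)| ≤ SA := by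
      have h := abs_quad_le Aᵀ x x habs 1 habs
      rw [mul_one] at h
      have hsum : (∑ i, ∑ j, |Aᵀ i j|) = SA := by
        rw [hSAdef, Finset.sum_comm]
        simp [Matrix.transpose_apply]
      rwa [hsum] at h
    have hGw : |x ⬝ᵥ (G *ᵥ w)| ≤ K2 := by
      have h := abs_quad_le G x w habs (↑n * B₂') hwbd
      rw [hK2def, hSGdef]
      exact h
    have hGu : 0 ≤ u ⬝ᵥ (G *ᵥ u) := hGq u
    have hGx : 0 ≤ x ⬝ᵥ (G *ᵥ x) := hGq x
    have hη12 : 0 ≤ η₁ s - η₂ s := by linarith [hη s]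
    have hη2s : 0 ≤ η₂ s := hη₂nonneg s
    have hη2B : η₂ s ≤ Bη := hBη s hsIcc
    have hDpos : 0 < x ⬝ᵥ ((E₂ - E₁) *ᵥ x) + ε * (Real.exp (c * s) * c) := by
      have hlamc : ε * (Real.exp (c * s) * c) = lam * c := by rw [hlamdef]; ring
      rw [hqDval, hlamc]
      have hsplit : η₁ s * (u ⬝ᵥ (G *ᵥ u)) - η₂ s * (w ⬝ᵥ (G *ᵥ w))
          = (η₁ s - η₂ s) * (u ⬝ᵥ (G *ᵥ u))
            + η₂ s * (2 * lam * (x ⬝ᵥ (G *ᵥ w)) + lam ^ 2 * (x ⬝ᵥ (G *ᵥ x))) := by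
        rw [hdecomp]
        ring
      rw [hsplit]
      have f2 : lam * (x ⬝ᵥ (A *ᵥ x)) ≤ lam * SA :=
        mul_le_mul_of_nonneg_left (abs_le.mp haA').2 hlam.le
      have f3 : lam * (x ⬝ᵥ (Aᵀ *ᵥ x)) ≤ lam * SA :=
        mul_le_mul_of_nonneg_left (abs_le.mp haAt').2 hlam.le
      have f4 : 0 ≤ (η₁ s - η₂ s) * (u ⬝ᵥ (G *ᵥ u)) := mul_nonneg hη12 hGu
      have p1 : 0 ≤ η₂ s * ((x ⬝ᵥ (G *ᵥ w)) + K2) :=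
        mul_nonneg hη2s (by linarith [(abs_le.mp hGw).1])
      have p2 : 0 ≤ (Bη - η₂ s) * K2 := mul_nonneg (by linarith) hK20
      have f6 : 0 ≤ lam * (η₂ s * (x ⬝ᵥ (G *ᵥ w)) + Bη * K2) :=
        mul_nonneg hlam.le (by linarith [p1, p2])
      have f7 : 0 ≤ lam ^ 2 * (η₂ s * (x ⬝ᵥ (G *ᵥ x))) :=
        mul_nonneg (sq_nonneg _) (mul_nonneg hη2s hGx)
      rw [hcdef]
      linarith [f2, f3, f4, f6, f7, hlam]
    set gfun : ℝ → ℝ := fun t =>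
      (∑ i, ∑ j, x i * (Ω₂ t i j - Ω₁ t i j) * x j) + ε * Real.exp (c * t) with hgdef
    have hgq : ∀ t, gfun t = x ⬝ᵥ ((Ω₂ t - Ω₁ t) *ᵥ x) + ε * Real.exp (c * t) := by
      intro t
      have heq : (∑ i, ∑ j, x i * (Ω₂ t i j - Ω₁ t i j) * x j)
          = x ⬝ᵥ ((Ω₂ t - Ω₁ t) *ᵥ x) := by
        rw [quad_expand]; simp [Matrix.sub_apply]
      rw [hgdef]
      simp only [heq]
    have hderiv : HasDerivAt gfun
        ((∑ i, ∑ j, x i * (E₂ - E₁) i j * x j) + ε * (Real.exp (c * s) * c)) s := by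
      apply HasDerivAt.add
      · apply HasDerivAt.fun_sum
        intro i _
        apply HasDerivAt.fun_sum
        intro j _
        have h3 := (((hode₂ s hsIcc i j).sub (hode₁ s hsIcc i j)).const_mul (x i)).mul_const (x j)
        have hval : x i * (E₂ - E₁) i j * x j
            = x i * ((A * Ω₂ s + Ω₂ s * Aᵀ + Q - η₂ s • (Ω₂ s * G * Ω₂ s)) i j
              - (A * Ω₁ s + Ω₁ s * Aᵀ + Q - η₁ s • (Ω₁ s * G * Ω₁ s)) i j) * x j := by
          rw [hE₁, hE₂, Matrix.sub_apply]
        rw [hval]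
        exact h3
      · have h4 := (((hasDerivAt_id s).const_mul c).exp).const_mul ε
        simpa using h4
    have hDpos' : 0 < (∑ i, ∑ j, x i * (E₂ - E₁) i j * x j) + ε * (Real.exp (c * s) * c) := by
      have heq : (∑ i, ∑ j, x i * (E₂ - E₁) i j * x j) = x ⬝ᵥ ((E₂ - E₁) *ᵥ x) :=
        (quad_expand _ _ _).symm
      rw [heq]
      exact hDpos
    have hgs0 : gfun s = 0 := by
      rw [hgq s, ← hlamdef]
      exact hq0
    have hslope := hasDerivAt_iff_tendsto_slope.mp hderiv
    have hmono : 𝓝[<] s ≤ 𝓝[≠] s :=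
      nhdsWithin_mono s fun t ht => ne_of_lt ht
    have ev1 : ∀ᶠ t in 𝓝[<] s, 0 < slope gfun s t :=
      (hslope.mono_left hmono).eventually (eventually_gt_nhds hDpos')
    have ev2 : ∀ᶠ t in 𝓝[<] s, 0 < t :=
      (eventually_gt_nhds hs_pos).filter_mono nhdsWithin_le_nhds
    have ev3 : ∀ᶠ t in 𝓝[<] s, t < s := eventually_mem_nhdsWithin
    obtain ⟨t, h1, h2, h3⟩ := (ev1.and (ev2.and ev3)).exists
    have htIcc : t ∈ Icc 0 T := ⟨h2.le, h3.le.trans hsIcc.2⟩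
    have hgt : 0 < gfun t := by
      rw [hgq t]
      exact hlt t htIcc h3 x hx1
    have hslope_val : slope gfun s t = gfun t / (t - s) := by
      rw [slope_def_field, hgs0, sub_zero]
    rw [hslope_val] at h1
    have hts : t - s < 0 := by linarith
    rcases div_pos_iff.mp h1 with ⟨_, hpos⟩ | ⟨hneg, _⟩
    · linarith
    · linarith
  -- conclude from key by letting ε → 0
  intro t ht
  refine Matrix.PosSemidef.of_dotProduct_mulVec_nonneg (((hpsd₂ t ht).1).sub ((hpsd₁ t ht).1)) ?_
  intro y
  have hsy : star y = y := by
    funext i; simp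
  rw [hsy]
  have : 0 ≤ y ⬝ᵥ ((Ω₂ t - Ω₁ t) *ᵥ y) := by
    apply scale_quad
    intro z hz
    by_contra hneg
    push_neg at hneg
    set q := z ⬝ᵥ ((Ω₂ t - Ω₁ t) *ᵥ z) with hqdef
    have hexp : 0 < Real.exp (c * t) := Real.exp_pos _
    have hεpos : 0 < -q / (2 * Real.exp (c * t)) := by
      apply div_pos (by linarith) (by linarith)
    have hk := key _ hεpos t ht z hz
    have : -q / (2 * Real.exp (c * t)) * Real.exp (c * t) = -q / 2 := by
      field_simp
    rw [← hqdef, this] at hk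
    linarith
  exact this
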